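/- If 𝔟 ≤ non(𝒩), then there exists a set X ⊆ ℝ of cardinality 𝔟 such that for every continuous function F : X → ℝ (X with the subspace topology), the image F''(X) is Lebesgue null. -/

import Mathlib

open Filter MeasureTheory

/-- `f ≤* g`: `f n ≤ g n` for all but finitely many `n`. -/
def EvLE (f g : ℕ → ℕ) : Prop := ∀ᶠ n in atTop, f n ≤ g n

/-- The bounding number `𝔟`: the least cardinality of an unbounded family in `ℕ^ℕ`. -/
noncomputable def boundingNumber : Cardinal :=
  sInf {c : Cardinal |
    ∃ F : Set (ℕ → ℕ), (∀ h : ℕ → ℕ, ∃ f ∈ F, ¬ EvLE f h) ∧ Cardinal.mk F = c}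

/-- `non(𝒩)`: the least cardinality of a non Lebesgue-null set of reals. -/
noncomputable def nonNull : Cardinal :=
  sInf {c : Cardinal | ∃ A : Set ℝ, volume A ≠ 0 ∧ Cardinal.mk A = c}

namespace Stmt1Aux

noncomputable def r (g : ℕ → ℕ) : ℝ := ∑' n, ((2:ℝ)⁻¹) ^ (g n)

lemma summable_r {g : ℕ → ℕ} (hg : StrictMono g) :
    Summable (fun n => ((2:ℝ)⁻¹) ^ (g n)) := by
  exact Summable.of_nonneg_of_le (fun n => by positivity)
    (fun n => pow_le_pow_of_le_one (by norm_num) (by norm_num) hg.le_apply)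
    (summable_geometric_of_lt_one (by norm_num) (by norm_num))

lemma add_le_apply {g : ℕ → ℕ} (hg : StrictMono g) (m n : ℕ) : g m + n ≤ g (n + m) := by
  induction n with
  | zero => simp
  | succ k ih =>
    have h2 := hg (show k + m < k + 1 + m by omega)
    omega

lemma tsum_geom : ∑' n : ℕ, ((2:ℝ)⁻¹) ^ n = 2 := by
  rw [tsum_geometric_of_lt_one (by norm_num) (by norm_num)]; norm_num

lemma strictMono_shift {g : ℕ → ℕ} (hg : StrictMono g) (m : ℕ) :
    StrictMono (fun n => g (n + m)) :=
  fun a b hab => hg (by omega)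

lemma summable_tail {g : ℕ → ℕ} (hg : StrictMono g) (m : ℕ) :
    Summable (fun n => ((2:ℝ)⁻¹) ^ (g (n + m))) :=
  summable_r (strictMono_shift hg m)

lemma tail_nonneg {g : ℕ → ℕ} (hg : StrictMono g) (m : ℕ) :
    0 ≤ ∑' n, ((2:ℝ)⁻¹) ^ (g (n + m)) :=
  tsum_nonneg (fun n => by positivity)

lemma tail_le {g : ℕ → ℕ} (hg : StrictMono g) (m : ℕ) :
    ∑' n, ((2:ℝ)⁻¹) ^ (g (n + m)) ≤ 2 * ((2:ℝ)⁻¹) ^ (g m) := by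
  have h1 := summable_tail hg m
  have h2 : Summable (fun n : ℕ => ((2:ℝ)⁻¹) ^ (g m) * ((2:ℝ)⁻¹) ^ n) :=
    (summable_geometric_of_lt_one (by norm_num) (by norm_num)).mul_left _
  calc ∑' n, ((2:ℝ)⁻¹) ^ (g (n + m)) ≤ ∑' n : ℕ, ((2:ℝ)⁻¹) ^ (g m) * ((2:ℝ)⁻¹) ^ n := by
        apply Summable.tsum_le_tsum _ h1 h2
        intro n
        rw [← pow_add]
        exact pow_le_pow_of_le_one (by norm_num) (by norm_num) (add_le_apply hg m n)
    _ = 2 * ((2:ℝ)⁻¹) ^ (g m) := by rw [tsum_mul_left, tsum_geom]; ring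

lemma r_split {g : ℕ → ℕ} (hg : StrictMono g) (m : ℕ) :
    r g = (∑ i ∈ Finset.range m, ((2:ℝ)⁻¹) ^ (g i)) + ∑' n, ((2:ℝ)⁻¹) ^ (g (n + m)) :=
  (Summable.sum_add_tsum_nat_add' (f := fun n => ((2:ℝ)⁻¹)^(g n)) (k := m) (summable_tail hg m)).symm

end Stmt1Aux

namespace Stmt1Aux
open Filter MeasureTheory Set

lemma r_prefix_dist {g : ℕ → ℕ} (hg : StrictMono g) (m : ℕ) :
    dist (∑ i ∈ Finset.range m, ((2:ℝ)⁻¹) ^ (g i)) (r g) ≤ 2 * ((2:ℝ)⁻¹) ^ (g m) := by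
  rw [Real.dist_eq, r_split hg m, abs_sub_comm]
  rw [add_sub_cancel_left, abs_of_nonneg (tail_nonneg hg m)]
  exact tail_le hg m

lemma r_lt {g g' : ℕ → ℕ} (hg : StrictMono g) (hg' : StrictMono g') (m : ℕ)
    (heq : ∀ i < m, g i = g' i) (hlt : g m < g' m) : r g' < r g := by
  rw [r_split hg m, r_split hg' m]
  have hpre : (∑ i ∈ Finset.range m, ((2:ℝ)⁻¹) ^ (g i)) =
      ∑ i ∈ Finset.range m, ((2:ℝ)⁻¹) ^ (g' i) := by
    apply Finset.sum_congr rfl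
    intro i hi
    rw [heq i (Finset.mem_range.1 hi)]
  rw [← hpre]
  have hT : ((2:ℝ)⁻¹) ^ (g m) + ((2:ℝ)⁻¹) ^ (g (1 + m)) ≤ ∑' n, ((2:ℝ)⁻¹) ^ (g (n + m)) := by
    have := Summable.sum_le_tsum (f := fun n => ((2:ℝ)⁻¹) ^ (g (n + m))) (Finset.range 2)
      (fun i _ => by positivity) (summable_tail hg m)
    simpa [Finset.sum_range_succ] using this
  have hT' : ∑' n, ((2:ℝ)⁻¹) ^ (g' (n + m)) ≤ ((2:ℝ)⁻¹) ^ (g m) := by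
    calc ∑' n, ((2:ℝ)⁻¹) ^ (g' (n + m)) ≤ 2 * ((2:ℝ)⁻¹) ^ (g' m) := tail_le hg' m
      _ ≤ ((2:ℝ)⁻¹) ^ (g m) := by
          have : ((2:ℝ)⁻¹) ^ (g' m) ≤ ((2:ℝ)⁻¹) ^ (g m + 1) :=
            pow_le_pow_of_le_one (by norm_num) (by norm_num) hlt
          rw [pow_succ] at this
          nlinarith [pow_nonneg (show (0:ℝ) ≤ 2⁻¹ by norm_num) (g' m)]
  have hpos : (0:ℝ) < ((2:ℝ)⁻¹) ^ (g (1 + m)) := by positivity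
  linarith

lemma r_inj {g g' : ℕ → ℕ} (hg : StrictMono g) (hg' : StrictMono g')
    (hr : r g = r g') : g = g' := by
  by_contra hne
  have hex : ∃ n, g n ≠ g' n := by
    by_contra hh
    push_neg at hh
    exact hne (funext hh)
  set m := Nat.find hex with hm
  have hdiff : g m ≠ g' m := Nat.find_spec hex
  have heq : ∀ i < m, g i = g' i := fun i hi => by
    have := Nat.find_min hex hi
    simpa using this
  rcases lt_or_gt_of_ne hdiff with hlt | hlt
  · have := r_lt hg hg' m heq hlt
    linarith
  · have := r_lt hg' hg m (fun i hi => (heq i hi).symm) hlt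
    linarith

end Stmt1Aux

namespace Stmt1Aux
open Filter MeasureTheory Set

/-- The countable set of finite dyadic sums. -/
def D : Set ℝ := {x | ∃ s : Finset ℕ, x = ∑ k ∈ s, ((2:ℝ)⁻¹) ^ k}

lemma countable_D : D.Countable := by
  have : D = Set.range (fun s : Finset ℕ => ∑ k ∈ s, ((2:ℝ)⁻¹) ^ k) := by
    ext x; simp [D, eq_comm, Set.range]
  rw [this]
  exact Set.countable_range _

lemma prefix_mem_D {g : ℕ → ℕ} (hg : StrictMono g) (m : ℕ) :
    (∑ i ∈ Finset.range m, ((2:ℝ)⁻¹) ^ (g i)) ∈ D := by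
  refine ⟨(Finset.range m).image g, ?_⟩
  rw [Finset.sum_image (fun a _ b _ hab => hg.injective hab)]

lemma lemA {K : Set ℝ} (hK : IsClosed K) (hKD : ∀ x ∈ D, x ∉ K) :
    ∃ h : ℕ → ℕ, ∀ g : ℕ → ℕ, StrictMono g → r g ∈ K → ∀ n, g n ≤ h n := by
  set T : Set (ℕ → ℕ) := {g | StrictMono g ∧ r g ∈ K} with hT
  have claim : ∀ m : ℕ, ∃ N : ℕ, ∀ g ∈ T, g m ≤ N := by
    intro m
    induction m using Nat.strong_induction_on with
    | _ m ih =>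
      by_contra hub
      push_neg at hub
      -- bounds for coordinates < m
      have hNf : ∃ Nf : ℕ → ℕ, ∀ i < m, ∀ g ∈ T, g i ≤ Nf i := by
        choose Nf hNf using fun i (hi : i < m) => ih i hi
        exact ⟨fun i => if hi : i < m then Nf i hi else 0,
          fun i hi g hg => by simpa [hi] using hNf i hi g hg⟩
      obtain ⟨Nf, hNf⟩ := hNf
      -- finite set of prefixes
      set P : Set (Fin m → ℕ) := {q | ∃ g ∈ T, ∀ i : Fin m, g i = q i} with hP
      have hPfin : P.Finite := by
        apply Set.Finite.subset (Set.Finite.pi (fun i : Fin m => Set.finite_Iic (Nf i)))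
        rintro q ⟨g, hgT, hq⟩ i _
        exact Set.mem_Iic.2 (hq i ▸ hNf i i.2 g hgT)
      set U : (Fin m → ℕ) → Set ℕ := fun q => {k | ∃ g ∈ T, (∀ i : Fin m, g i = q i) ∧ g m = k}
        with hU
      have hcover : {k | ∃ g ∈ T, g m = k} ⊆ ⋃ q ∈ P, U q := by
        rintro k ⟨g, hgT, hgk⟩
        exact Set.mem_biUnion ⟨g, hgT, fun i => rfl⟩ ⟨g, hgT, fun i => rfl, hgk⟩
      have hnb : ¬ BddAbove {k | ∃ g ∈ T, g m = k} := by
        rw [not_bddAbove_iff]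
        intro N
        obtain ⟨g, hgT, hgm⟩ := hub N
        exact ⟨g m, ⟨g, hgT, rfl⟩, hgm⟩
      have : ∃ q ∈ P, ¬ BddAbove (U q) := by
        by_contra hball
        push_neg at hball
        exact hnb (BddAbove.mono hcover ((hPfin.bddAbove_biUnion).2 hball))
      obtain ⟨q, ⟨g₀, hg₀T, hg₀q⟩, hqnb⟩ := this
      rw [not_bddAbove_iff] at hqnb
      -- the dyadic limit point
      set d : ℝ := ∑ i ∈ Finset.range m, ((2:ℝ)⁻¹) ^ (g₀ i) with hd
      have hdD : d ∈ D := prefix_mem_D hg₀T.1 m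
      have hdK : d ∈ K := by
        rw [← hK.closure_eq]
        rw [Metric.mem_closure_iff]
        intro ε hε
        obtain ⟨n0, hn0⟩ := exists_pow_lt_of_lt_one (show (0:ℝ) < ε/2 by linarith)
          (show (2:ℝ)⁻¹ < 1 by norm_num)
        obtain ⟨k, ⟨g, hgT, hgq, hgm⟩, hkn0⟩ := hqnb n0
        refine ⟨r g, hgT.2, ?_⟩
        have hpre : d = ∑ i ∈ Finset.range m, ((2:ℝ)⁻¹) ^ (g i) := by
          apply Finset.sum_congr rfl
          intro i hi
          rw [hgq ⟨i, Finset.mem_range.1 hi⟩, hg₀q ⟨i, Finset.mem_range.1 hi⟩]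
        calc dist d (r g) ≤ 2 * ((2:ℝ)⁻¹) ^ (g m) := by
              rw [hpre]; exact r_prefix_dist hgT.1 m
          _ ≤ 2 * ((2:ℝ)⁻¹) ^ n0 := by
              apply mul_le_mul_of_nonneg_left _ (by norm_num)
              exact pow_le_pow_of_le_one (by norm_num) (by norm_num) (by omega)
          _ < ε := by linarith
      exact hKD d hdD hdK
  choose h hh using claim
  exact ⟨h, fun g hg hgK n => hh n g ⟨hg, hgK⟩⟩

end Stmt1Aux

namespace Stmt1Aux
open Filter MeasureTheory Set Cardinal

def BSet : Set Cardinal :=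
  {c : Cardinal | ∃ F : Set (ℕ → ℕ), (∀ h : ℕ → ℕ, ∃ f ∈ F, ¬ EvLE f h) ∧ Cardinal.mk F = c}

lemma bN_eq : boundingNumber = sInf BSet := rfl

lemma BSet_nonempty : BSet.Nonempty := by
  refine ⟨Cardinal.mk (Set.univ : Set (ℕ → ℕ)), Set.univ, fun h => ⟨fun n => h n + 1, trivial, ?_⟩, rfl⟩
  intro hev
  obtain ⟨n, hn⟩ := hev.exists
  simp at hn

lemma exists_witness : ∃ F₀ : Set (ℕ → ℕ),
    (∀ h : ℕ → ℕ, ∃ f ∈ F₀, ¬ EvLE f h) ∧ Cardinal.mk F₀ = boundingNumber := by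
  have := csInf_mem BSet_nonempty
  rw [← bN_eq] at this
  exact this

lemma aleph0_le_b : Cardinal.aleph0 ≤ boundingNumber := by
  rw [bN_eq]
  apply le_csInf BSet_nonempty
  rintro c ⟨F, hFub, hFc⟩
  by_contra hc
  push_neg at hc
  rw [← hFc, Cardinal.lt_aleph0_iff_set_finite] at hc
  obtain ⟨f, hfF, hf⟩ := hFub (fun n => hc.toFinset.sup (fun f => f n))
  apply hf
  filter_upwards with n
  exact Finset.le_sup (f := fun f : ℕ → ℕ => f n) (hc.mem_toFinset.2 hfF)

lemma bounded_of_lt_b {F : Set (ℕ → ℕ)} (hF : Cardinal.mk F < boundingNumber) :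
    ∃ h : ℕ → ℕ, ∀ f ∈ F, EvLE f h := by
  by_contra hb
  push_neg at hb
  have : boundingNumber ≤ Cardinal.mk F := by
    rw [bN_eq]
    apply csInf_le (OrderBot.bddBelow _)
    exact ⟨F, fun h => by obtain ⟨f, hf1, hf2⟩ := hb h; exact ⟨f, hf1, hf2⟩, rfl⟩
  exact absurd this (not_le.2 hF)

lemma null_of_lt_nonNull {A : Set ℝ} (hA : Cardinal.mk A < nonNull) : volume A = 0 := by
  by_contra hv
  have : nonNull ≤ Cardinal.mk A := csInf_le (OrderBot.bddBelow _) ⟨A, hv, rfl⟩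
  exact absurd this (not_le.2 hA)

end Stmt1Aux

namespace Stmt1Aux
open Filter MeasureTheory Set Cardinal

abbrev W : Type := (Cardinal.ord boundingNumber).ToType

/-- strict monotonization dominating `b` -/
def sm (b : ℕ → ℕ) : ℕ → ℕ := fun n => n + (Finset.range (n + 1)).sup b

lemma sm_strictMono (b : ℕ → ℕ) : StrictMono (sm b) := by
  apply strictMono_nat_of_lt_succ
  intro n
  have : (Finset.range (n + 1)).sup b ≤ (Finset.range (n + 1 + 1)).sup b :=
    Finset.sup_mono (Finset.range_subset_range.2 (by omega : n + 1 ≤ n + 1 + 1))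
  simp only [sm]
  omega

lemma le_sm (b : ℕ → ℕ) (n : ℕ) : b n ≤ sm b n := by
  have : b n ≤ (Finset.range (n + 1)).sup b :=
    Finset.le_sup (Finset.mem_range.2 (by omega))
  simp only [sm]
  omega

lemma bound_ex (w : W) (ih : ∀ v, v < w → ℕ → ℕ) :
    ∃ h : ℕ → ℕ, ∀ v, ∀ hv : v < w, EvLE (ih v hv) h := by
  have hcard : Cardinal.mk (Set.range (fun v : Set.Iio w => ih v.1 v.2)) < boundingNumber := by
    apply lt_of_le_of_lt (Cardinal.mk_range_le)
    exact Cardinal.mk_Iio_ord_toType w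
  obtain ⟨h, hh⟩ := bounded_of_lt_b hcard
  exact ⟨h, fun v hv => hh _ ⟨⟨v, hv⟩, rfl⟩⟩

noncomputable def scaleF (gfun : W → ℕ → ℕ) : W → ℕ → ℕ :=
  (wellFounded_lt (α := W)).fix (fun w ih =>
    sm (fun n => Classical.choose (bound_ex w ih) n + gfun w n + 1))

lemma scaleF_eq (gfun : W → ℕ → ℕ) (w : W) :
    scaleF gfun w = sm (fun n =>
      Classical.choose (bound_ex w (fun v _ => scaleF gfun v)) n + gfun w n + 1) := by
  rw [scaleF, WellFounded.fix_eq]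

lemma scaleF_strictMono (gfun : W → ℕ → ℕ) (w : W) : StrictMono (scaleF gfun w) := by
  rw [scaleF_eq]
  exact sm_strictMono _

lemma scaleF_ge (gfun : W → ℕ → ℕ) (w : W) (n : ℕ) : gfun w n ≤ scaleF gfun w n := by
  rw [scaleF_eq]
  calc gfun w n ≤ Classical.choose (bound_ex w (fun v _ => scaleF gfun v)) n + gfun w n + 1 := by
        omega
    _ ≤ _ := le_sm (fun n => Classical.choose (bound_ex w (fun v _ => scaleF gfun v)) n + gfun w n + 1) n

lemma scaleF_lt {gfun : W → ℕ → ℕ} {v w : W} (hvw : v < w) :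
    ∀ᶠ n in atTop, scaleF gfun v n < scaleF gfun w n := by
  have hB := Classical.choose_spec (bound_ex w (fun v _ => scaleF gfun v)) v hvw
  filter_upwards [hB] with n hn
  calc scaleF gfun v n ≤ Classical.choose (bound_ex w (fun v _ => scaleF gfun v)) n := hn
    _ < Classical.choose (bound_ex w (fun v _ => scaleF gfun v)) n + gfun w n + 1 := by omega
    _ ≤ scaleF gfun w n := by
        rw [scaleF_eq]
        exact le_sm (fun n => Classical.choose (bound_ex w (fun v _ => scaleF gfun v)) n + gfun w n + 1) n

lemma scaleF_evLE {gfun : W → ℕ → ℕ} {v w : W} (hvw : v < w) :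
    EvLE (scaleF gfun v) (scaleF gfun w) := by
  filter_upwards [scaleF_lt (gfun := gfun) hvw] with n hn
  omega

lemma scaleF_injective (gfun : W → ℕ → ℕ) : Function.Injective (scaleF gfun) := by
  intro v w hvw
  by_contra hne
  rcases lt_or_gt_of_ne hne with hlt | hlt
  · obtain ⟨n, hn⟩ := (scaleF_lt (gfun := gfun) hlt).exists
    rw [hvw] at hn
    omega
  · obtain ⟨n, hn⟩ := (scaleF_lt (gfun := gfun) hlt).exists
    rw [hvw] at hn
    omega

end Stmt1Aux


open Stmt1Aux Set Cardinal

theorem stmt1 (h : boundingNumber ≤ nonNull) :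
    ∃ X : Set ℝ, Cardinal.mk X = boundingNumber ∧
      ∀ F : X → ℝ, Continuous F → volume (Set.range F) = 0 := by
  
  classical
  obtain ⟨F₀, hF₀ub, hF₀card⟩ := exists_witness
  have hWcard : Cardinal.mk W = Cardinal.mk F₀ := by
    rw [hF₀card, Cardinal.mk_ord_toType]
  obtain ⟨e⟩ := Cardinal.eq.1 hWcard
  set gfun : W → ℕ → ℕ := fun w => ((e w : ↥F₀) : ℕ → ℕ) with hgfun
  set f : W → ℕ → ℕ := scaleF gfun with hf
  set ρ : W → ℝ := fun w => r (f w) with hρ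
  have hfsm : ∀ w, StrictMono (f w) := fun w => scaleF_strictMono gfun w
  have hρinj : Function.Injective ρ := fun v w hvw =>
    scaleF_injective gfun (r_inj (hfsm v) (hfsm w) hvw)
  set X : Set ℝ := D ∪ Set.range ρ with hX
  refine ⟨X, ?_, ?_⟩
  · apply le_antisymm
    · calc Cardinal.mk X ≤ Cardinal.mk D + Cardinal.mk (Set.range ρ) :=
          Cardinal.mk_union_le _ _
        _ ≤ ℵ₀ + boundingNumber := by
            apply add_le_add
            · exact Cardinal.mk_le_aleph0_iff.2 countable_D.to_subtype
            · rw [Cardinal.mk_range_eq ρ hρinj, Cardinal.mk_ord_toType]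
        _ = boundingNumber := Cardinal.add_eq_right aleph0_le_b aleph0_le_b
    · rw [← Cardinal.mk_ord_toType boundingNumber, ← Cardinal.mk_range_eq ρ hρinj]
      exact Cardinal.mk_le_mk_of_subset Set.subset_union_right
  · intro F hF
    by_contra h0
    have hpos : 0 < volume (Set.range F) := pos_iff_ne_zero.2 h0
    obtain ⟨ε, hε0, hεlt⟩ := exists_between hpos
    have hDX : D ⊆ X := Set.subset_union_left
    set E : Set ℝ := F '' {x : X | (x : ℝ) ∈ D} with hE
    have hEc : E.Countable := (countable_D.preimage Subtype.val_injective).image F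
    have hE0 : volume E = 0 := hEc.measure_zero _
    obtain ⟨G, hEG, hGopen, hGlt⟩ := Set.exists_isOpen_lt_of_lt E ε (by rw [hE0]; exact hε0)
    have hopen : IsOpen (F ⁻¹' G) := hGopen.preimage hF
    rw [isOpen_induced_iff] at hopen
    obtain ⟨V, hVopen, hVeq⟩ := hopen
    have hDV : ∀ x ∈ D, x ∈ V := by
      intro x hx
      have hxX : x ∈ X := hDX hx
      have hmem : (⟨x, hxX⟩ : X) ∈ F ⁻¹' G :=
        hEG (Set.mem_image_of_mem F (by exact hx))
      rw [← hVeq] at hmem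
      exact hmem
    obtain ⟨hbd, hhbd⟩ := lemA (K := Vᶜ) (isClosed_compl_iff.2 hVopen)
      (fun x hx hxK => hxK (hDV x hx))
    obtain ⟨g₀, hg₀F₀, hg₀⟩ := hF₀ub hbd
    set w₀ : W := e.symm ⟨g₀, hg₀F₀⟩ with hw₀
    have hgfunw₀ : gfun w₀ = g₀ := by rw [hgfun]; simp [hw₀]
    have hw₀nb : ¬ EvLE (f w₀) hbd := by
      intro hc
      apply hg₀
      rw [← hgfunw₀]
      filter_upwards [hc] with n hn
      exact le_trans (scaleF_ge gfun w₀ n) hn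
    set S : Set X := {x : X | (x : ℝ) ∉ V} with hS
    have hsmall : S ⊆ Subtype.val ⁻¹' (ρ '' Set.Iio w₀) := by
      intro x hxV
      rcases x.2 with hxD | hxρ
      · exact absurd (hDV _ hxD) hxV
      · obtain ⟨w, hw⟩ := hxρ
        refine ⟨w, ?_, hw⟩
        have hK : r (f w) ∈ Vᶜ := by
          rw [show r (f w) = ρ w from rfl, hw]
          exact hxV
        have hev : EvLE (f w) hbd :=
          Filter.Eventually.of_forall (hhbd (f w) (hfsm w) hK)
        by_contra hnot
        simp only [Set.mem_Iio, not_lt] at hnot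
        rcases eq_or_lt_of_le hnot with heq | hlt
        · rw [heq] at hw₀nb
          exact hw₀nb hev
        · apply hw₀nb
          filter_upwards [scaleF_lt (gfun := gfun) hlt, hev] with n hn1 hn2
          exact le_trans (le_of_lt hn1) hn2
    have hsmallnull : volume (F '' S) = 0 := by
      apply null_of_lt_nonNull
      apply lt_of_le_of_lt _ (lt_of_lt_of_le (Cardinal.mk_Iio_ord_toType w₀) h)
      calc Cardinal.mk (F '' S) ≤ Cardinal.mk S := Cardinal.mk_image_le
        _ ≤ Cardinal.mk (Subtype.val ⁻¹' (ρ '' Set.Iio w₀) : Set X) :=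
            Cardinal.mk_le_mk_of_subset hsmall
        _ ≤ Cardinal.mk (ρ '' Set.Iio w₀) :=
            Cardinal.mk_preimage_of_injective _ _ Subtype.val_injective
        _ ≤ Cardinal.mk (Set.Iio w₀) := Cardinal.mk_image_le
    have hcover : Set.range F ⊆ G ∪ F '' S := by
      rintro y ⟨x, rfl⟩
      by_cases hxV : (x : ℝ) ∈ V
      · left
        have : x ∈ F ⁻¹' G := by rw [← hVeq]; exact hxV
        exact this
      · right
        exact Set.mem_image_of_mem F hxV
    have : volume (Set.range F) ≤ volume G := by
      calc volume (Set.range F) ≤ volume (G ∪ F '' S) := measure_mono hcover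
        _ ≤ volume G + volume (F '' S) := measure_union_le _ _
        _ = volume G := by rw [hsmallnull, add_zero]
    exact absurd (lt_of_le_of_lt this hGlt) (not_lt.2 (le_of_lt hεlt))
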